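/- Let M be an ultrametric space and let A be a spherically complete subspace of M. Then A is proximinal in M, i.e., for every x in M there exists a_0 in A such that d(x, a_0) = dist(x, A) = inf{d(x, z) : z in A}. -/

import Mathlib

/-- A subset `A` of a metric space is *spherically complete* if every nonempty nested
(totally ordered by inclusion) family of closed balls centered at points of `A` has
nonempty intersection with `A`. -/
def IsSphericallyComplete {M : Type*} [MetricSpace M] (A : Set M) : Prop :=
  ∀ (ι : Type) (c : ι → M) (r : ι → ℝ), Nonempty ι →
    (∀ i, c i ∈ A) → (∀ i, 0 ≤ r i) →
    (∀ i j, Metric.closedBall (c i) (r i) ⊆ Metric.closedBall (c j) (r j) ∨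
      Metric.closedBall (c j) (r j) ⊆ Metric.closedBall (c i) (r i)) →
    (A ∩ ⋂ i, Metric.closedBall (c i) (r i)).Nonempty

lemma ball_nested_aux {M : Type*} [MetricSpace M] [IsUltrametricDist M] {x a b : M}
    (h : dist x a ≤ dist x b) :
    Metric.closedBall a (dist x a) ⊆ Metric.closedBall b (dist x b) := by
  intro y hy
  simp only [Metric.mem_closedBall] at hy ⊢
  have h1 : dist y b ≤ max (dist y a) (dist a b) := IsUltrametricDist.dist_triangle_max y a b
  have h2 : dist a b ≤ max (dist a x) (dist x b) := IsUltrametricDist.dist_triangle_max a x b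
  rw [dist_comm a x] at h2
  exact h1.trans (max_le (hy.trans h) (h2.trans (max_le h le_rfl)))

/-- A spherically complete subspace of an ultrametric space is proximinal. -/
theorem spherically_complete_is_proximinal {M : Type*} [MetricSpace M] [IsUltrametricDist M]
    (A : Set M) (hA : A.Nonempty) (hsc : IsSphericallyComplete A) :
    ∀ x : M, ∃ a ∈ A, dist x a = Metric.infDist x A := by
  intro x
  set S : Set ℝ := {r : ℝ | ∃ a ∈ A, dist x a = r} with hS
  have hmem : ∀ i : S, ∃ a ∈ A, dist x a = (i : ℝ) := fun i => i.2
  choose c hcA hcd using hmem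
  have hne : Nonempty S := ⟨⟨dist x hA.choose, hA.choose, hA.choose_spec, rfl⟩⟩
  have hr : ∀ i : S, (0:ℝ) ≤ (i : ℝ) := fun i => (hcd i) ▸ dist_nonneg
  have hnest : ∀ i j : S, Metric.closedBall (c i) (i : ℝ) ⊆ Metric.closedBall (c j) (j : ℝ) ∨
      Metric.closedBall (c j) (j : ℝ) ⊆ Metric.closedBall (c i) (i : ℝ) := by
    intro i j
    rcases le_total (i : ℝ) (j : ℝ) with h | h
    · left
      rw [← hcd i, ← hcd j] at h ⊢
      exact ball_nested_aux h
    · right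
      rw [← hcd i, ← hcd j] at h ⊢
      exact ball_nested_aux h
  obtain ⟨a₀, ha₀A, ha₀⟩ := hsc S c (fun i => (i : ℝ)) hne hcA hr hnest
  refine ⟨a₀, ha₀A, le_antisymm ?_ (Metric.infDist_le_dist_of_mem ha₀A)⟩
  apply le_of_forall_gt
  intro b hb
  obtain ⟨a, haA, ha⟩ := (Metric.infDist_lt_iff hA).1 hb
  have hi : dist x a ∈ S := ⟨a, haA, rfl⟩
  have h1 : dist a₀ (c ⟨dist x a, hi⟩) ≤ dist x a := by
    have := Set.mem_iInter.1 ha₀ ⟨dist x a, hi⟩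
    simpa [Metric.mem_closedBall, dist_comm] using this
  have h2 : dist x a₀ ≤ max (dist x (c ⟨dist x a, hi⟩)) (dist (c ⟨dist x a, hi⟩) a₀) :=
    IsUltrametricDist.dist_triangle_max _ _ _
  rw [hcd ⟨dist x a, hi⟩] at h2; rw [dist_comm] at h1
  exact (h2.trans (max_le le_rfl h1)).trans_lt ha
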